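/- arXiv:1603.03350 — 3 statements merged into one kernel-verified Lean document; each statement's English description precedes it below -/
import Mathlib

section
/- Let N ≥ 3, 1 < p < ∞ and 0 ≤ α ≤ (N-2)(p-1). Then for all nonnegative real numbers I_0, I_α, J_0, J_α satisfying γ_0 J_0^2 ≤ I_0^2 and γ_α J_α^2 ≤ I_α^2 (where γ_α = ((N+α-2)/p)^2), and any real c ≤ (p-1)γ_0, one has -(p-1)I_0^2 - (p-1)I_α^2 + c J_0^2 + α I_α J_α ≤ 0. -/
theorem dissipativity_algebra (N : ℕ) (hN : 3 ≤ N) (p α c : ℝ) (hp : 1 < p)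
    (hα0 : 0 ≤ α) (hα : α ≤ ((N : ℝ) - 2) * (p - 1))
    (I0 Iα J0 Jα : ℝ) (hI0 : 0 ≤ I0) (hIα : 0 ≤ Iα) (hJ0 : 0 ≤ J0) (hJα : 0 ≤ Jα)
    (h0 : (((N : ℝ) - 2) / p) ^ 2 * J0 ^ 2 ≤ I0 ^ 2)
    (hα2 : (((N : ℝ) + α - 2) / p) ^ 2 * Jα ^ 2 ≤ Iα ^ 2)
    (hc : c ≤ (p - 1) * (((N : ℝ) - 2) / p) ^ 2) :
    -(p - 1) * I0 ^ 2 - (p - 1) * Iα ^ 2 + c * J0 ^ 2 + α * Iα * Jα ≤ 0 := by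
  have hN3 : (3 : ℝ) ≤ (N : ℝ) := by exact_mod_cast hN
  have hp0 : (0 : ℝ) < p := by linarith
  set k : ℝ := ((N : ℝ) + α - 2) / p with hk
  have hk0 : 0 ≤ k := by
    apply div_nonneg _ hp0.le; linarith
  have hkJ : k * Jα ≤ Iα := by
    nlinarith [sq_nonneg (k * Jα - Iα), sq_nonneg (k * Jα + Iα), mul_nonneg hk0 hJα]
  have hck : (p - 1) * k ≥ α := by
    rw [hk, ge_iff_le, ← mul_div_assoc, le_div_iff₀ hp0]
    nlinarith
  -- c * J0^2 ≤ (p-1) * I0^2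
  have h1 : c * J0 ^ 2 ≤ (p - 1) * I0 ^ 2 := by
    calc c * J0 ^ 2 ≤ (p - 1) * (((N : ℝ) - 2) / p) ^ 2 * J0 ^ 2 := by
          nlinarith [sq_nonneg J0]
      _ ≤ (p - 1) * I0 ^ 2 := by nlinarith
  nlinarith [mul_le_mul_of_nonneg_left hkJ hIα, mul_nonneg hIα hJα]
end

section
/- Let N ≥ 3, 1 < p < ∞, α ≥ 0, c ≤ (p-1)((N-2)/p)^2, and η < 0 satisfying η + (N+α-2)^2/(p p') - α(N+α-2)/p ≥ 0 where p' = p/(p-1). Then for all nonnegative reals I_0, I_α, J_0, J_α with γ_0 J_0^2 ≤ I_0^2 and γ_α J_α^2 ≤ I_α^2 (γ_α = ((N+α-2)/p)^2), one has -(p-1)I_0^2 - (p-1)I_α^2 + c J_0^2 + α I_α J_α - η J_α^2 ≤ 0. -/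
set_option maxHeartbeats 1000000


theorem dissipativity_algebra_eta (N : ℕ) (hN : 3 ≤ N) (p α c η : ℝ) (hp : 1 < p)
    (hα : 0 ≤ α) (hc : c ≤ (p - 1) * (((N : ℝ) - 2) / p) ^ 2) (hη : η < 0)
    (hηcond : η + ((N : ℝ) + α - 2) ^ 2 / (p * (p / (p - 1))) - α * ((N : ℝ) + α - 2) / p ≥ 0)
    (I0 Iα J0 Jα : ℝ) (hI0 : 0 ≤ I0) (hIα : 0 ≤ Iα) (hJ0 : 0 ≤ J0) (hJα : 0 ≤ Jα)
    (h0 : (((N : ℝ) - 2) / p) ^ 2 * J0 ^ 2 ≤ I0 ^ 2)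
    (hα2 : (((N : ℝ) + α - 2) / p) ^ 2 * Jα ^ 2 ≤ Iα ^ 2) :
    -(p - 1) * I0 ^ 2 - (p - 1) * Iα ^ 2 + c * J0 ^ 2 + α * Iα * Jα - η * Jα ^ 2 ≤ 0 := by
  have hp0 : (0:ℝ) < p := by linarith
  have hp1 : (0:ℝ) < p - 1 := by linarith
  set β : ℝ := ((N : ℝ) + α - 2) / p with hβdef
  have hN3 : (3:ℝ) ≤ (N:ℝ) := by exact_mod_cast hN
  have hβpos : 0 < β := by
    apply div_pos; linarith; exact hp0
  -- rewrite the condition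
  have hrw : ((N : ℝ) + α - 2) ^ 2 / (p * (p / (p - 1))) = (p - 1) * β ^ 2 := by
    rw [hβdef]; field_simp
  have hcond : η + (p - 1) * β ^ 2 - α * β ≥ 0 := by
    have : α * ((N : ℝ) + α - 2) / p = α * β := by rw [hβdef]; ring
    rw [hrw, this] at hηcond; linarith
  -- Iα ≥ β * Jα
  have hIJ : β * Jα ≤ Iα := by
    nlinarith [mul_nonneg hβpos.le hJα, sq_nonneg (Iα - β * Jα)]
  -- (p-1)β ≥ α
  have hβα : α ≤ (p - 1) * β := by
    have h1 : 0 < (p - 1) * β ^ 2 - α * β := by linarith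
    nlinarith
  have hJ0sq := mul_le_mul_of_nonneg_right hc (sq_nonneg J0)
  have key : 0 ≤ (Iα - β * Jα) * ((p - 1) * (Iα + β * Jα) - α * Jα) := by
    apply mul_nonneg (by linarith)
    nlinarith [mul_nonneg (mul_nonneg hp1.le hβpos.le) hJα, mul_le_mul_of_nonneg_right hβα hJα]
  have key' : α * Iα * Jα - (p - 1) * Iα ^ 2 ≤ (α * β - (p - 1) * β ^ 2) * Jα ^ 2 := by
    linarith [key, sq_nonneg Jα]
  have hC : 0 ≤ (η + (p - 1) * β ^ 2 - α * β) * Jα ^ 2 :=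
    mul_nonneg hcond (sq_nonneg Jα)
  have hA := mul_le_mul_of_nonneg_left h0 hp1.le
  nlinarith [hJ0sq, hA, key', hC]
end

section
/- Let N ≥ 3, p > 1, and let v(r) = r^β e^{-r/p} with β > (2p-N)/p and δ := βp + N - 2p > 0. Then ∫_0^∞ (v''(r) + ((N-1)/r)v'(r)) r^{-2(p-1)} v(r)^{p-1} r^{N-1} dr = (β(β+N-2) + ((1-N-2β)/p)δ + δ(δ+1)/p^2)·Γ(δ), where Γ is the Euler Gamma function. -/
open MeasureTheory Real

theorem radial_integral_gamma (N : ℕ) (hN : 3 ≤ N) (p β δ : ℝ) (hp : 1 < p)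
    (hβ : (2 * p - (N : ℝ)) / p < β) (hδ : δ = β * p + (N : ℝ) - 2 * p) (hδpos : 0 < δ)
    (v : ℝ → ℝ) (hv : v = fun r => r ^ β * Real.exp (-r / p)) :
    ∫ r in Set.Ioi (0 : ℝ),
        (deriv (deriv v) r + (((N : ℝ) - 1) / r) * deriv v r)
          * r ^ (-2 * (p - 1)) * (v r) ^ (p - 1) * r ^ ((N : ℝ) - 1)
      = (β * (β + (N : ℝ) - 2) + ((1 - (N : ℝ) - 2 * β) / p) * δ + δ * (δ + 1) / p ^ 2)
          * Real.Gamma δ := by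
  have hp0 : (0:ℝ) < p := lt_trans one_pos hp
  have hp0' : p ≠ 0 := hp0.ne'
  -- derivative formula on (0,∞)
  have hvd : ∀ x ∈ Set.Ioi (0:ℝ),
      HasDerivAt v ((β * x ^ (β - 1) - x ^ β / p) * Real.exp (-x / p)) x := by
    intro x hx
    have hx0 : (0:ℝ) < x := hx
    have h1 : HasDerivAt (fun x : ℝ => x ^ β) (β * x ^ (β - 1)) x :=
      Real.hasDerivAt_rpow_const (Or.inl hx0.ne')
    have h2 : HasDerivAt (fun x : ℝ => Real.exp (-x / p)) (Real.exp (-x / p) * (-1 / p)) x := by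
      have hlin : HasDerivAt (fun x : ℝ => -x / p) (-1 / p) x := by
        simpa using ((hasDerivAt_id x).neg.div_const p)
      exact (Real.hasDerivAt_exp (-x / p)).comp x hlin
    have : HasDerivAt (fun x : ℝ => x ^ β * Real.exp (-x / p)) _ x := h1.mul h2
    rw [hv]
    convert this using 1
    field_simp
    ring
  have key : Set.EqOn
      (fun r => (deriv (deriv v) r + (((N : ℝ) - 1) / r) * deriv v r)
          * r ^ (-2 * (p - 1)) * (v r) ^ (p - 1) * r ^ ((N : ℝ) - 1))
      (fun r => β * (β + (N : ℝ) - 2) * (Real.exp (-r) * r ^ (δ - 1))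
          - (((N : ℝ) - 1 + 2 * β) / p) * (Real.exp (-r) * r ^ (δ + 1 - 1))
          + (1 / p ^ 2) * (Real.exp (-r) * r ^ (δ + 2 - 1)))
      (Set.Ioi (0:ℝ)) := by
    intro r hr
    have hr0 : (0:ℝ) < r := hr
    simp only
    -- first derivative at r
    have hd1 : deriv v r = (β * r ^ (β - 1) - r ^ β / p) * Real.exp (-r / p) :=
      (hvd r hr).deriv
    -- second derivative at r
    have hev : deriv v =ᶠ[nhds r]
        (fun x => (β * x ^ (β - 1) - x ^ β / p) * Real.exp (-x / p)) := by
      filter_upwards [Ioi_mem_nhds hr0] with x hx using (hvd x hx).deriv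
    have hd2 : deriv (deriv v) r
        = (β * (β - 1) * r ^ (β - 2) - 2 * β / p * r ^ (β - 1) + r ^ β / p ^ 2)
            * Real.exp (-r / p) := by
      rw [hev.deriv_eq]
      have h1 : HasDerivAt (fun x : ℝ => β * x ^ (β - 1) - x ^ β / p)
          (β * ((β - 1) * r ^ (β - 1 - 1)) - β * r ^ (β - 1) / p) r := by
        exact ((Real.hasDerivAt_rpow_const (p := β - 1) (Or.inl hr0.ne')).const_mul β).sub
          ((Real.hasDerivAt_rpow_const (p := β) (Or.inl hr0.ne')).div_const p)
      have h2 : HasDerivAt (fun x : ℝ => Real.exp (-x / p)) (Real.exp (-r / p) * (-1 / p)) r := by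
        have hlin : HasDerivAt (fun x : ℝ => -x / p) (-1 / p) r := by
          simpa using ((hasDerivAt_id r).neg.div_const p)
        exact (Real.hasDerivAt_exp (-r / p)).comp r hlin
      rw [show deriv (fun x => (β * x ^ (β - 1) - x ^ β / p) * rexp (-x / p)) r = _ from (h1.mul h2).deriv]
      have e12 : β - 1 - 1 = β - 2 := by ring
      rw [e12]
      field_simp
      ring
    rw [hd1, hd2, hv]
    simp only
    -- power expansions
    have e1 : r ^ (β - 1) = r ^ (β - 2) * r := by
      rw [show β - 1 = (β - 2) + 1 by ring, Real.rpow_add hr0, Real.rpow_one]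
    have e2 : r ^ β = r ^ (β - 2) * r ^ (2:ℕ) := by
      rw [show β = (β - 2) + (2:ℝ) by ring, Real.rpow_add hr0,
        show (2:ℝ) = ((2:ℕ):ℝ) by norm_num, Real.rpow_natCast]
      norm_num
    -- (v r)^(p-1)
    have hpow : (r ^ β * Real.exp (-r / p)) ^ (p - 1)
        = r ^ (β * (p - 1)) * Real.exp (-r / p * (p - 1)) := by
      rw [Real.mul_rpow (Real.rpow_nonneg hr0.le β) (Real.exp_nonneg _),
        ← Real.rpow_mul hr0.le]
      congr 1
      rw [Real.rpow_def_of_pos (Real.exp_pos _), Real.log_exp]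
    rw [hpow]
    -- combine exponentials
    have hexp : Real.exp (-r) = Real.exp (-r / p) * Real.exp (-r / p * (p - 1)) := by
      rw [← Real.exp_add]
      congr 1
      field_simp
      ring
    rw [hexp]
    -- rewrite the δ powers
    have h1 : r ^ (δ - 1)
        = r ^ (β - 2) * (r ^ (-2 * (p - 1)) * (r ^ (β * (p - 1)) * r ^ ((N:ℝ) - 1))) := by
      rw [← Real.rpow_add hr0, ← Real.rpow_add hr0, ← Real.rpow_add hr0]
      congr 1
      rw [hδ]; ring
    have h2 : r ^ (δ + 1 - 1)
        = r ^ (β - 2) * r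
          * (r ^ (-2 * (p - 1)) * (r ^ (β * (p - 1)) * r ^ ((N:ℝ) - 1))) := by
      rw [show r ^ (β - 2) * r = r ^ (β - 1) from e1.symm,
        ← Real.rpow_add hr0, ← Real.rpow_add hr0, ← Real.rpow_add hr0]
      congr 1
      rw [hδ]; ring
    have h3 : r ^ (δ + 2 - 1)
        = r ^ (β - 2) * r ^ (2:ℕ)
          * (r ^ (-2 * (p - 1)) * (r ^ (β * (p - 1)) * r ^ ((N:ℝ) - 1))) := by
      rw [show r ^ (β - 2) * r ^ (2:ℕ) = r ^ β from e2.symm,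
        ← Real.rpow_add hr0, ← Real.rpow_add hr0, ← Real.rpow_add hr0]
      congr 1
      rw [hδ]; ring
    rw [h1, h2, h3, e1, e2]
    field_simp
    ring
  rw [setIntegral_congr_fun measurableSet_Ioi key]
  have hδ1 : (0:ℝ) < δ + 1 := by linarith
  have hδ2 : (0:ℝ) < δ + 2 := by linarith
  have I1 : IntegrableOn (fun x : ℝ => Real.exp (-x) * x ^ (δ - 1)) (Set.Ioi 0) :=
    Real.GammaIntegral_convergent hδpos
  have I2 : IntegrableOn (fun x : ℝ => Real.exp (-x) * x ^ (δ + 1 - 1)) (Set.Ioi 0) :=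
    Real.GammaIntegral_convergent hδ1
  have I3 : IntegrableOn (fun x : ℝ => Real.exp (-x) * x ^ (δ + 2 - 1)) (Set.Ioi 0) :=
    Real.GammaIntegral_convergent hδ2
  have Ia : Integrable (fun x : ℝ =>
      β * (β + (N : ℝ) - 2) * (Real.exp (-x) * x ^ (δ - 1))
        - (((N : ℝ) - 1 + 2 * β) / p) * (Real.exp (-x) * x ^ (δ + 1 - 1)))
      (volume.restrict (Set.Ioi 0)) := (I1.const_mul _).sub (I2.const_mul _)
  rw [integral_add Ia (I3.const_mul _),
    integral_sub (I1.const_mul _) (I2.const_mul _),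
    integral_const_mul, integral_const_mul, integral_const_mul,
    ← Real.Gamma_eq_integral hδpos, ← Real.Gamma_eq_integral hδ1, ← Real.Gamma_eq_integral hδ2,
    show δ + 2 = (δ + 1) + 1 by ring,
    Real.Gamma_add_one hδ1.ne', Real.Gamma_add_one hδpos.ne']
  field_simp
  ring
end
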